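/- Let C be a d-clutter on a finite vertex set V with C not complete, Δ = ⟨C⟩ and Γ = ⟨C^∨⟩. Let v be a shedding vertex of Γ and let e ∈ MS(C) with v ∈ e. Then v is a shedding vertex of ⟨(C − e)^∨⟩. Moreover, setting Δ′ = ⟨C − e⟩ and e′ = e \ {v}, one has Facets(link_{Δ′}(v)) = Facets(link_Δ(v)) − e′, the deletion of the maximal subcircuit e′ in the (d−1)-clutter Facets(link_Δ(v)). -/
import Mathlib


namespace ClutterPaper

variable {α : Type*} [DecidableEq α]

/-- `C` is a uniform clutter on vertex set `V` all of whose circuits have cardinality `c`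
(i.e. a `(c-1)`-dimensional uniform clutter). -/
def IsClutter (V : Finset α) (c : ℕ) (C : Finset (Finset α)) : Prop :=
  ∀ F ∈ C, F ⊆ V ∧ F.card = c

/-- The complement clutter `C̄`: all `c`-subsets of `V` not in `C`. -/
def compClutter (V : Finset α) (c : ℕ) (C : Finset (Finset α)) : Finset (Finset α) :=
  V.powersetCard c \ C

/-- `C^∨ = { V \ F | F ∈ C̄ }`. -/
def clutterDual (V : Finset α) (c : ℕ) (C : Finset (Finset α)) : Finset (Finset α) :=
  (compClutter V c C).image fun F => V \ F

/-- `A` is a clique of the clutter `C` (with circuit cardinality `c`) on vertex set `V`: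
all `c`-subsets of `A` are circuits. -/
def IsClique (V : Finset α) (c : ℕ) (C : Finset (Finset α)) (A : Finset α) : Prop :=
  A ⊆ V ∧ ∀ F ⊆ A, F.card = c → F ∈ C

/-- The closed neighborhood `N_C[e] = e ∪ { v ∈ V | e ∪ {v} ∈ C }`. -/
def closedNbhd (V : Finset α) (C : Finset (Finset α)) (e : Finset α) : Finset α :=
  e ∪ V.filter fun v => insert v e ∈ C

/-- `e` is a maximal subcircuit of the clutter `C` with circuit cardinality `c`:
`e` has cardinality `c - 1` and is contained in some circuit. -/
def IsMS (c : ℕ) (C : Finset (Finset α)) (e : Finset α) : Prop :=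
  e.card + 1 = c ∧ ∃ F ∈ C, e ⊆ F

/-- `e` is a simplicial maximal subcircuit: a maximal subcircuit whose closed
neighborhood is a clique. -/
def IsSMS (V : Finset α) (c : ℕ) (C : Finset (Finset α)) (e : Finset α) : Prop :=
  IsMS c C e ∧ IsClique V c C (closedNbhd V C e)

/-- `e` is a free maximal subcircuit: contained in exactly one circuit. -/
def IsFreeMS (c : ℕ) (C : Finset (Finset α)) (e : Finset α) : Prop :=
  e.card + 1 = c ∧ ∃! F, F ∈ C ∧ e ⊆ F

/-- Deletion `C − e` of a maximal subcircuit: the circuits not containing `e`. -/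
def delMS (C : Finset (Finset α)) (e : Finset α) : Finset (Finset α) :=
  C.filter fun F => ¬ e ⊆ F

/-- Deletion of a vertex: circuits (or faces) not containing `v`. -/
def delVert (C : Finset (Finset α)) (v : α) : Finset (Finset α) :=
  C.filter fun F => v ∉ F

/-- Chordality of a uniform clutter (circuit cardinality `c`) on `V`: there is a sequence of
deletions of simplicial maximal subcircuits ending in the clutter with no circuits. -/
inductive Chordal (V : Finset α) (c : ℕ) : Finset (Finset α) → Prop
  | empty : Chordal V c ∅
  | step {C : Finset (Finset α)} (e : Finset α) :
      IsSMS V c C e → Chordal V c (delMS C e) → Chordal V c C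

/-- The ascent `C⁺` of a clutter with circuit cardinality `c`: all `(c+1)`-subsets of `V`
that are cliques of `C`. -/
def ascent (V : Finset α) (c : ℕ) (C : Finset (Finset α)) : Finset (Finset α) :=
  (V.powersetCard (c + 1)).filter fun A => A.powersetCard c ⊆ C

/-- The simplicial complex `⟨D⟩` generated by a clutter `D`: all subsets of its elements. -/
def complexOf (D : Finset (Finset α)) : Finset (Finset α) :=
  D.biUnion Finset.powerset

/-- A family of finsets is a simplicial complex if it is downward closed. -/
def IsComplex (Δ : Finset (Finset α)) : Prop :=
  ∀ F ∈ Δ, ∀ G ⊆ F, G ∈ Δ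

/-- The facets (maximal faces) of a simplicial complex. -/
def facets (Δ : Finset (Finset α)) : Finset (Finset α) :=
  Δ.filter fun F => ∀ G ∈ Δ, F ⊆ G → F = G

/-- `link_Δ(v) = { F \ {v} | v ∈ F ∈ Δ }`. -/
def link (Δ : Finset (Finset α)) (v : α) : Finset (Finset α) :=
  (Δ.filter fun F => v ∈ F).image fun F => F.erase v

/-- `v` is a shedding vertex of `Δ`: no face of `link_Δ(v)` is a facet of `Δ − v`. -/
def Shedding (Δ : Finset (Finset α)) (v : α) : Prop :=
  ∀ F ∈ link Δ v, F ∉ facets (delVert Δ v)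

/-- Alexander dual of a simplicial complex on vertex set `V`:
`Δ^∨ = { V \ F | F ⊆ V, F ∉ Δ }`. -/
def alexDual (V : Finset α) (Δ : Finset (Finset α)) : Finset (Finset α) :=
  (V.powerset.filter fun F => F ∉ Δ).image fun F => V \ F

/-- `Δ` is pure with all facets of cardinality `c` (dimension `c - 1`), and nonempty. -/
def PureDim (Δ : Finset (Finset α)) (c : ℕ) : Prop :=
  Δ.Nonempty ∧ ∀ F ∈ facets Δ, F.card = c

/-- Vertex decomposability of a simplicial complex. -/
inductive VDecomp : Finset (Finset α) → Prop
  | simplex {Δ : Finset (Finset α)} : (facets Δ).card = 1 → VDecomp Δ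
  | shed {Δ : Finset (Finset α)} (v : α) : Shedding Δ v →
      VDecomp (link Δ v) → VDecomp (delVert Δ v) → VDecomp Δ

/-- The vertex set of a clutter (or of the complex it generates). -/
def vertexSet (Ω : Finset (Finset α)) : Finset α :=
  Ω.biUnion id

/-- `Ω` (given by its set of facets, each of cardinality `d+1`) is a `d`-cycle:
nonempty, pure of dimension `d`, `d`-path connected, and every `(d-1)`-dimensional
face lies in an even number of `d`-faces. -/
def IsCycle (d : ℕ) (Ω : Finset (Finset α)) : Prop :=
  Ω.Nonempty ∧ (∀ F ∈ Ω, F.card = d + 1) ∧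
    (∀ F ∈ Ω, ∀ G ∈ Ω,
      Relation.ReflTransGen (fun A B => A ∈ Ω ∧ B ∈ Ω ∧ (A ∩ B).card = d) F G) ∧
    ∀ e : Finset α, e.card = d → Even ((Ω.filter fun F => e ⊆ F).card)

/-- A face-minimal `d`-cycle: no `d`-cycle has a strictly smaller set of `d`-faces. -/
def FaceMinimalCycle (d : ℕ) (Ω : Finset (Finset α)) : Prop :=
  IsCycle d Ω ∧ ∀ Ω' : Finset (Finset α), IsCycle d Ω' → Ω' ⊆ Ω → Ω' = Ω

/-- `Ω` is `d`-complete: it contains every `(d+1)`-subset of its vertex set. -/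
def DComplete (d : ℕ) (Ω : Finset (Finset α)) : Prop :=
  ∀ F ⊆ vertexSet Ω, F.card = d + 1 → F ∈ Ω

/-- The complex `⟨C⟩` generated by the `d`-dimensional clutter `C` is `d`-chorded. -/
def Chorded (d : ℕ) (C : Finset (Finset α)) : Prop :=
  ∀ Ω : Finset (Finset α), FaceMinimalCycle d Ω → Ω ⊆ C → ¬ DComplete d Ω →
    ∃ (k : ℕ) (Ωs : Fin k → Finset (Finset α)), 2 ≤ k ∧
      (∀ i, IsCycle d (Ωs i) ∧ Ωs i ⊆ C) ∧
      (∀ F ∈ Ω, ∃ i, F ∈ Ωs i) ∧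
      (∀ F ∈ Ω, Odd ((Finset.univ.filter fun i => F ∈ Ωs i).card)) ∧
      (∀ F : Finset α, (∃ i, F ∈ Ωs i) → F ∉ Ω →
        Even ((Finset.univ.filter fun i => F ∈ Ωs i).card)) ∧
      ∀ i, vertexSet (Ωs i) ⊂ vertexSet Ω

/-- The circuits of `D` admit an admissible order. -/
def HasAdmissibleOrder (D : Finset (Finset α)) : Prop :=
  ∃ (t : ℕ) (F : Fin t → Finset α), Function.Injective F ∧
    (∀ G, G ∈ D ↔ ∃ i, F i = G) ∧
    ∀ i j : Fin t, j < i →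
      ∃ l ∈ F j \ F i, ∃ k : Fin t, k < i ∧ F k \ F i = {l}

/-- Contraction `D/v` of a (not necessarily uniform) clutter: the minimal sets of
`{ e \ {v} | e ∈ D }`. -/
def contractAux (D : Finset (Finset α)) (v : α) : Finset (Finset α) :=
  D.image fun e => e.erase v

def contract (D : Finset (Finset α)) (v : α) : Finset (Finset α) :=
  (contractAux D v).filter fun e => ∀ f ∈ contractAux D v, f ⊆ e → f = e

/-- `D` has a simplicial vertex (trivially true if `D` has no vertices). -/
def HasSimpVertex (D : Finset (Finset α)) : Prop :=
  vertexSet D = ∅ ∨ ∃ v ∈ vertexSet D, ∀ e₁ ∈ D, ∀ e₂ ∈ D, v ∈ e₁ → v ∈ e₂ →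
    ∃ e₃ ∈ D, e₃ ⊆ (e₁ ∪ e₂).erase v

/-- `D` is W-chordal: every clutter obtained from `D` by a sequence of vertex deletions
and contractions has a simplicial vertex. -/
def WChordal (D : Finset (Finset α)) : Prop :=
  ∀ D' : Finset (Finset α),
    Relation.ReflTransGen (fun X Y => ∃ v, Y = delVert X v ∨ Y = contract X v) D D' →
    HasSimpVertex D'

lemma mem_complexOf {D : Finset (Finset α)} {F : Finset α} :
    F ∈ complexOf D ↔ ∃ G ∈ D, F ⊆ G := by
  simp [complexOf]

lemma complexOf_mono {D D' : Finset (Finset α)} (h : D ⊆ D') :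
    complexOf D ⊆ complexOf D' := by
  intro F hF
  rw [mem_complexOf] at hF ⊢
  obtain ⟨G, hG, hFG⟩ := hF
  exact ⟨G, h hG, hFG⟩

lemma facets_complexOf_of_equicard {D : Finset (Finset α)} {c : ℕ}
    (h : ∀ F ∈ D, F.card = c) : facets (complexOf D) = D := by
  ext F
  simp only [facets, Finset.mem_filter, mem_complexOf]
  constructor
  · rintro ⟨⟨G, hG, hFG⟩, hmax⟩
    have hFe := hmax G ⟨G, hG, Finset.Subset.refl G⟩ hFG
    rw [hFe]; exact hG
  · intro hF
    refine ⟨⟨F, hF, Finset.Subset.refl F⟩, ?_⟩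
    rintro G ⟨H, hH, hGH⟩ hFG
    have hc : G.card ≤ F.card := by
      rw [h F hF, ← h H hH]
      exact Finset.card_le_card hGH
    exact Finset.eq_of_subset_of_card_le hFG hc

lemma link_complexOf (D : Finset (Finset α)) (v : α) :
    link (complexOf D) v =
      complexOf ((D.filter fun F => v ∈ F).image fun F => F.erase v) := by
  ext F
  simp only [link, Finset.mem_image, Finset.mem_filter, mem_complexOf]
  constructor
  · rintro ⟨G, ⟨⟨H, hH, hGH⟩, hvG⟩, rfl⟩
    exact ⟨H.erase v, ⟨H, ⟨hH, hGH hvG⟩, rfl⟩, Finset.erase_subset_erase v hGH⟩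
  · rintro ⟨K, ⟨H, ⟨hH, hvH⟩, rfl⟩, hFK⟩
    have hvF : v ∉ F := fun hvF => (Finset.mem_erase.mp (hFK hvF)).1 rfl
    refine ⟨insert v F, ⟨⟨H, hH, ?_⟩, Finset.mem_insert_self v F⟩,
      Finset.erase_insert hvF⟩
    exact Finset.insert_subset hvH (hFK.trans (Finset.erase_subset v H))

/-- With `C` a non-complete `d`-clutter on `V`, `v` a shedding vertex of
`Γ = ⟨C^∨⟩`, and `e ∈ MS(C)` with `v ∈ e`: `v` is a shedding vertex of `⟨(C − e)^∨⟩`, and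
`Facets(link_{⟨C−e⟩}(v)) = Facets(link_{⟨C⟩}(v)) − e'` where `e' = e \ {v}`. -/
theorem shedding_stable (V : Finset α) (d : ℕ) (C : Finset (Finset α))
    (hC : IsClutter V (d + 1) C) (hnc : C ≠ V.powersetCard (d + 1))
    (v : α) (hv : v ∈ V)
    (hshed : Shedding (complexOf (clutterDual V (d + 1) C)) v)
    (e : Finset α) (he : IsMS (d + 1) C e) (hve : v ∈ e) :
    Shedding (complexOf (clutterDual V (d + 1) (delMS C e))) v ∧
      facets (link (complexOf (delMS C e)) v) =
        delMS (facets (link (complexOf C) v)) (e.erase v) := by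
  have hdel_sub : delMS C e ⊆ C := Finset.filter_subset _ _
  -- duals grow under deletion
  have hdual_sub : clutterDual V (d + 1) C ⊆ clutterDual V (d + 1) (delMS C e) := by
    apply Finset.image_subset_image
    exact Finset.sdiff_subset_sdiff (Finset.Subset.refl _) hdel_sub
  set Γ := complexOf (clutterDual V (d + 1) C) with hΓdef
  set Γ' := complexOf (clutterDual V (d + 1) (delMS C e)) with hΓ'def
  have hΓsub : Γ ⊆ Γ' := complexOf_mono hdual_sub
  -- link of the bigger dual complex at v equals link of the smaller one
  have hlink : link Γ' v ⊆ link Γ v := by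
    intro F hF
    simp only [link, Finset.mem_image, Finset.mem_filter] at hF ⊢
    obtain ⟨G, ⟨hGΓ', hvG⟩, rfl⟩ := hF
    refine ⟨G, ⟨?_, hvG⟩, rfl⟩
    rw [hΓ'def, mem_complexOf] at hGΓ'
    obtain ⟨H, hH, hGH⟩ := hGΓ'
    rw [hΓdef, mem_complexOf]
    simp only [clutterDual, Finset.mem_image, compClutter, Finset.mem_sdiff] at hH ⊢
    obtain ⟨K, ⟨hKpow, hKdel⟩, rfl⟩ := hH
    by_cases hKC : K ∈ C
    · -- then e ⊆ K, so v ∈ K, so v ∉ V \ K: contradiction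
      exfalso
      have heK : e ⊆ K := by
        by_contra hne
        exact hKdel (Finset.mem_filter.mpr ⟨hKC, hne⟩)
      have : v ∈ V \ K := hGH hvG
      exact (Finset.mem_sdiff.mp this).2 (heK hve)
    · exact ⟨V \ K, ⟨K, ⟨hKpow, hKC⟩, rfl⟩, hGH⟩
  constructor
  · -- shedding is preserved
    intro F hF hfac
    have hFΓ : F ∈ link Γ v := hlink hF
    -- F is a face of Γ avoiding v
    have hFmem : F ∈ delVert Γ v := by
      simp only [link, Finset.mem_image, Finset.mem_filter] at hFΓ
      obtain ⟨G, ⟨hGΓ, hvG⟩, rfl⟩ := hFΓ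
      refine Finset.mem_filter.mpr ⟨?_, Finset.notMem_erase v G⟩
      rw [hΓdef, mem_complexOf] at hGΓ ⊢
      obtain ⟨H, hH, hGH⟩ := hGΓ
      exact ⟨H, hH, (Finset.erase_subset v G).trans hGH⟩
    apply hshed F hFΓ
    simp only [facets, Finset.mem_filter] at hfac ⊢
    refine ⟨hFmem, fun G hG hFG => ?_⟩
    have hG' : G ∈ delVert Γ' v := by
      simp only [delVert, Finset.mem_filter] at hG ⊢
      exact ⟨hΓsub hG.1, hG.2⟩
    exact hfac.2 G hG' hFG
  · -- facets of the link
    have hCe : ∀ F ∈ (C.filter fun F => v ∈ F).image (fun F => F.erase v),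
        F.card = d := by
      rintro F hF
      simp only [Finset.mem_image, Finset.mem_filter] at hF
      obtain ⟨G, ⟨hG, hvG⟩, rfl⟩ := hF
      rw [Finset.card_erase_of_mem hvG, (hC G hG).2]
      omega
    have hCe' : ∀ F ∈ ((delMS C e).filter fun F => v ∈ F).image (fun F => F.erase v),
        F.card = d := by
      rintro F hF
      simp only [Finset.mem_image, Finset.mem_filter] at hF
      obtain ⟨G, ⟨hG, hvG⟩, rfl⟩ := hF
      rw [Finset.card_erase_of_mem hvG, (hC G (hdel_sub hG)).2]
      omega
    rw [link_complexOf, link_complexOf, facets_complexOf_of_equicard hCe',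
      facets_complexOf_of_equicard hCe]
    ext F
    simp only [delMS, Finset.mem_filter, Finset.mem_image]
    constructor
    · rintro ⟨G, ⟨⟨hGC, heG⟩, hvG⟩, rfl⟩
      refine ⟨⟨G, ⟨hGC, hvG⟩, rfl⟩, fun hsub => heG ?_⟩
      intro x hx
      by_cases hxv : x = v
      · exact hxv ▸ hvG
      · exact Finset.mem_of_mem_erase (hsub (Finset.mem_erase.mpr ⟨hxv, hx⟩))
    · rintro ⟨⟨G, ⟨hGC, hvG⟩, rfl⟩, hne⟩
      refine ⟨G, ⟨⟨hGC, fun heG => hne ?_⟩, hvG⟩, rfl⟩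
      exact Finset.erase_subset_erase v heG

end ClutterPaper
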